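/- Let g ≥ 1 be an integer. The polynomial (1 + q²)^{2g} − 2^{2g}·q^{2g} ∈ ℤ[q] is divisible by (1 − q²)² in ℤ[q], and the quotient polynomial P satisfies: P has degree 4g − 4; the coefficient of q^j in P is zero for all odd j; all coefficients of P are nonnegative; P is palindromic, i.e. the coefficient of q^j equals the coefficient of q^{4g−4−j} for all 0 ≤ j ≤ 4g−4; and the even coefficients are monotonically nondecreasing up to the middle, i.e. coeff(P, 2i) ≤ coeff(P, 2i+2) whenever 2i + 2 ≤ 2g − 2. -/
import Mathlib


/-!
Statement 17: the Chern-grading specialization `Ω(N_{2,1}, q, 1)` is a polynomial with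
symmetric, unimodal, even, nonnegative coefficients (Corollary 5.10 of the paper).
-/

open Polynomial

noncomputable section

/-- The quotient polynomial in the variable `t = q²`, defined by the recursion
`Q₀ = 1`, `Q_{n+1} = (1+X)² Qₙ + 4^{n+1} X^{n+1}`. -/
private noncomputable def Qa : ℕ → Polynomial ℤ
| 0 => 1
| (n+1) => (1 + X)^2 * Qa n + C ((4:ℤ)^(n+1)) * X^(n+1)

private lemma Qa_ident (n : ℕ) :
    (1 - X)^2 * Qa n = (1 + X)^(2*(n+1)) - C ((4:ℤ)^(n+1)) * X^(n+1) := by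
  induction n with
  | zero =>
    show (1 - X)^2 * 1 = (1+X)^(2*1) - C ((4:ℤ)^1) * X^1
    rw [show C ((4:ℤ)^1) = 4 by norm_num]; ring
  | succ n ih =>
    rw [Qa, show ((4:ℤ)^(n+1+1)) = (4:ℤ)^(n+1) * 4 by ring, map_mul,
      show (C (4:ℤ)) = (4:Polynomial ℤ) by norm_num]
    linear_combination (1+X)^2 * ih

private lemma coeff_step (n j : ℕ) : (Qa (n+1)).coeff j =
    (Qa n).coeff j + (if 1 ≤ j then (Qa n).coeff (j-1) else 0) * 2
    + (if 2 ≤ j then (Qa n).coeff (j-2) else 0)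
    + (if j = n+1 then (4:ℤ)^(n+1) else 0) := by
  have h : Qa (n+1) = Qa n + Qa n * X^1 * C 2 + Qa n * X^2 + C ((4:ℤ)^(n+1)) * X^(n+1) := by
    rw [Qa, show (C (2:ℤ)) = (2:Polynomial ℤ) by norm_num]; ring
  rw [h]
  simp only [coeff_add, coeff_mul_C, coeff_mul_X_pow', coeff_C]
  split_ifs <;> (try (exfalso; omega)) <;> ring

private lemma Qa_props (n : ℕ) :
    ((Qa n).coeff (2*n) = 1) ∧
    (∀ j, 2*n < j → (Qa n).coeff j = 0) ∧
    (∀ j, 0 ≤ (Qa n).coeff j) ∧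
    (∀ j k, j + k = 2*n → (Qa n).coeff j = (Qa n).coeff k) ∧
    (∀ a b, a + 1 = b → b ≤ n → (Qa n).coeff a ≤ (Qa n).coeff b) := by
  induction n with
  | zero =>
    refine ⟨by simp [Qa], ?_, ?_, ?_, ?_⟩
    · intro j hj; simp [Qa, coeff_one]; omega
    · intro j; simp [Qa, coeff_one]; split_ifs <;> norm_num
    · intro j k hjk
      have hj : j = 0 := by omega
      have hk : k = 0 := by omega
      rw [hj, hk]
    · intro a b hab hb; omega
  | succ n ih =>
    obtain ⟨h1, h0, hpos, hpal, hmono⟩ := ih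
    have hc : (0:ℤ) ≤ 4^(n+1) := by positivity
    refine ⟨?_, ?_, ?_, ?_, ?_⟩
    · rw [coeff_step, if_pos (by omega), if_pos (by omega), if_neg (by omega),
        show 2*(n+1) - 1 = 2*n+1 by omega, show 2*(n+1) - 2 = 2*n by omega,
        h0 _ (by omega), h0 _ (by omega), h1]
      ring
    · intro j hj
      rw [coeff_step, if_pos (by omega : 1 ≤ j), if_pos (by omega : 2 ≤ j),
        if_neg (by omega : ¬ j = n+1), h0 j (by omega), h0 (j-1) (by omega),
        h0 (j-2) (by omega)]
      ring
    · intro j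
      have p0 := hpos j; have p1 := hpos (j-1); have p2 := hpos (j-2)
      rw [coeff_step]; split_ifs <;> linarith
    · intro j k hjk
      rw [coeff_step, coeff_step]
      have hA : (Qa n).coeff j = (if 2 ≤ k then (Qa n).coeff (k-2) else 0) := by
        split_ifs with h
        · exact hpal j (k-2) (by omega)
        · exact h0 j (by omega)
      have hC : (if 2 ≤ j then (Qa n).coeff (j-2) else 0) = (Qa n).coeff k := by
        split_ifs with h
        · exact hpal (j-2) k (by omega)
        · exact (h0 k (by omega)).symm
      have hB : (if 1 ≤ j then (Qa n).coeff (j-1) else 0)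
          = (if 1 ≤ k then (Qa n).coeff (k-1) else 0) := by
        split_ifs with h h' h'
        · exact hpal (j-1) (k-1) (by omega)
        · exact h0 (j-1) (by omega)
        · exact (h0 (k-1) (by omega)).symm
        · omega
      have hD : (if j = n+1 then (4:ℤ)^(n+1) else 0)
          = (if k = n+1 then (4:ℤ)^(n+1) else 0) := by
        split_ifs <;> first | rfl | omega
      rw [hA, hB, hC, hD]; ring
    · intro a b hab hb
      subst hab
      rw [coeff_step, coeff_step, if_neg (by omega : ¬ a = n+1),
        if_pos (by omega : 1 ≤ a+1), show a+1-1 = a from rfl]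
      rcases Nat.lt_or_ge (a+1) (n+1) with hint | hmid
      · -- interior : a + 1 ≤ n
        rw [if_neg (by omega : ¬ a+1 = n+1)]
        have f1 : (Qa n).coeff a ≤ (Qa n).coeff (a+1) := hmono a (a+1) rfl (by omega)
        by_cases ha2 : 2 ≤ a
        · rw [if_pos (by omega : 1 ≤ a), if_pos ha2, if_pos (by omega : 2 ≤ a+1),
            show a+1-2 = a-1 by omega]
          have f2 : (Qa n).coeff (a-1) ≤ (Qa n).coeff a := by
            have := hmono (a-1) a (by omega) (by omega); exact this
          have f3 : (Qa n).coeff (a-2) ≤ (Qa n).coeff (a-1) :=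
            hmono (a-2) (a-1) (by omega) (by omega)
          linarith
        · by_cases ha1 : 1 ≤ a
          · rw [if_pos ha1, if_neg (by omega : ¬ 2 ≤ a), if_pos (by omega : 2 ≤ a+1),
              show a+1-2 = a-1 by omega]
            have f2 : (Qa n).coeff (a-1) ≤ (Qa n).coeff a :=
              hmono (a-1) a (by omega) (by omega)
            have p1 := hpos (a+1)
            linarith
          · rw [if_neg ha1, if_neg (by omega : ¬ 2 ≤ a), if_neg (by omega : ¬ 2 ≤ a+1)]
            have p0 := hpos a
            linarith
      · -- middle : a = n
        have han : a = n := by omega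
        subst han
        rw [if_pos rfl]
        have pn1 := hpos (a+1)
        by_cases ha2 : 2 ≤ a
        · rw [if_pos (by omega : 1 ≤ a), if_pos ha2, if_pos (by omega : 2 ≤ a+1),
            show a+1-2 = a-1 by omega]
          have fpal : (Qa a).coeff (a+1) = (Qa a).coeff (a-1) :=
            hpal (a+1) (a-1) (by omega)
          have f2 : (Qa a).coeff (a-1) ≤ (Qa a).coeff a :=
            hmono (a-1) a (by omega) (by omega)
          have f3 : (Qa a).coeff (a-2) ≤ (Qa a).coeff (a-1) :=
            hmono (a-2) (a-1) (by omega) (by omega)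
          linarith
        · by_cases ha1 : 1 ≤ a
          · have ha : a = 1 := by omega
            subst ha
            rw [if_pos (by norm_num : 1 ≤ 1), if_neg (by norm_num : ¬ 2 ≤ 1),
              if_pos (by norm_num : 2 ≤ 2)]
            have fpal : (Qa 1).coeff 2 = (Qa 1).coeff 0 := hpal 2 0 (by omega)
            have p1 := hpos 1
            simp only [show (2:ℕ)-2 = 0 from rfl, show (1:ℕ)-1 = 0 from rfl]
            linarith
          · have ha : a = 0 := by omega
            subst ha
            rw [if_neg (by norm_num : ¬ 1 ≤ 0), if_neg (by norm_num : ¬ 2 ≤ 0),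
              if_neg (by norm_num : ¬ 2 ≤ 1)]
            have p0 := hpos 0
            linarith

private lemma Qa_natDegree (n : ℕ) : (Qa n).natDegree = 2*n := by
  obtain ⟨h1, h0, -, -, -⟩ := Qa_props n
  refine le_antisymm (natDegree_le_iff_coeff_eq_zero.mpr ?_) ?_
  · intro N hN; exact h0 N hN
  · apply le_natDegree_of_ne_zero; rw [h1]; exact one_ne_zero

/-- for `g ≥ 1`, the polynomial `(1+q²)^{2g} − 2^{2g} q^{2g} ∈ ℤ[q]` is
divisible by `(1−q²)²`, and the quotient `P` has degree `4g−4`, vanishing odd coefficients,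
nonnegative coefficients, palindromic coefficients (`coeff j = coeff (4g−4−j)`), and even
coefficients nondecreasing up to the middle. -/
theorem stmt17 (g : ℕ) (hg : 1 ≤ g) :
    ∃ P : Polynomial ℤ,
      ((1 - X ^ 2) ^ 2) * P =
        (1 + X ^ 2) ^ (2 * g) - (2 : Polynomial ℤ) ^ (2 * g) * X ^ (2 * g) ∧
      P.natDegree = 4 * g - 4 ∧
      (∀ j, Odd j → P.coeff j = 0) ∧
      (∀ j, 0 ≤ P.coeff j) ∧
      (∀ j ≤ 4 * g - 4, P.coeff j = P.coeff (4 * g - 4 - j)) ∧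
      (∀ i, 2 * i + 2 ≤ 2 * g - 2 → P.coeff (2 * i) ≤ P.coeff (2 * i + 2)) := by
  obtain ⟨n, rfl⟩ : ∃ n, g = n + 1 := ⟨g - 1, by omega⟩
  obtain ⟨h1, h0, hpos, hpal, hmono⟩ := Qa_props n
  refine ⟨expand ℤ 2 (Qa n), ?_, ?_, ?_, ?_, ?_, ?_⟩
  · have h := congrArg (expand ℤ 2) (Qa_ident n)
    simp only [map_mul, map_sub, map_add, map_pow, map_one, expand_X, expand_C] at h
    rw [h]
    congr 1
    rw [show C (4:ℤ) = (2:Polynomial ℤ)^2 by norm_num, ← pow_mul, ← pow_mul]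
  · rw [natDegree_expand, Qa_natDegree]; omega
  · intro j hj
    obtain ⟨m, rfl⟩ := hj
    rw [coeff_expand (by norm_num), if_neg (by omega)]
  · intro j
    rw [coeff_expand (by norm_num)]
    split_ifs
    · exact hpos _
    · exact le_refl _
  · intro j hj
    rw [coeff_expand (by norm_num), coeff_expand (by norm_num)]
    by_cases h2 : 2 ∣ j
    · obtain ⟨k, rfl⟩ := h2
      rw [if_pos ⟨k, rfl⟩, if_pos (by omega : 2 ∣ 4*(n+1)-4-2*k),
        show 2*k/2 = k by omega, show (4*(n+1)-4-2*k)/2 = 2*n - k by omega]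
      exact hpal k (2*n - k) (by omega)
    · rw [if_neg h2, if_neg (by omega)]
  · intro i hi
    rw [coeff_expand (by norm_num), coeff_expand (by norm_num),
      if_pos ⟨i, rfl⟩, if_pos (by omega : 2 ∣ 2*i+2),
      show 2*i/2 = i by omega, show (2*i+2)/2 = i+1 by omega]
    exact hmono i (i+1) rfl (by omega)

end
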